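/- (Hermite's criterion) A polynomial f in F_q[x], where q = p^r for p prime, is a permutation polynomial of F_q if and only if (1) the reduction of f(x)^{q-1} mod (x^q - x) has degree q-1 with leading coefficient 1, and (2) for each integer t with 1 ≤ t ≤ q-2 and t not divisible by p, the reduction of f(x)^t mod (x^q - x) has degree at most q-2. -/

import Mathlib

open Polynomial

section HermiteAux

variable {F : Type*} [Field F] [Fintype F]

private lemma hermite_sum_pow_card_sub_one :
    ∑ x : F, x ^ (Fintype.card F - 1) = -1 := by
  classical
  have hq : 2 ≤ Fintype.card F := Fintype.one_lt_card
  rw [← Finset.sum_sdiff (Finset.subset_univ ({0} : Finset F)), Finset.sum_singleton,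
    zero_pow (by omega : Fintype.card F - 1 ≠ 0), add_zero]
  have h1 : ∀ x ∈ Finset.univ \ ({0} : Finset F), x ^ (Fintype.card F - 1) = 1 := by
    intro x hx
    simp only [Finset.mem_sdiff, Finset.mem_singleton] at hx
    exact FiniteField.pow_card_sub_one_eq_one x hx.2
  rw [Finset.sum_congr rfl h1, Finset.sum_const, Finset.card_sdiff_of_subset (Finset.subset_univ _),
    Finset.card_singleton, Finset.card_univ, nsmul_eq_mul, mul_one, Nat.cast_sub (by omega),
    FiniteField.cast_card_eq_zero, Nat.cast_one, zero_sub]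

private lemma hermite_sum_eval {g : F[X]} (hg : g.natDegree < Fintype.card F) :
    ∑ c : F, g.eval c = - g.coeff (Fintype.card F - 1) := by
  have hq : 2 ≤ Fintype.card F := Fintype.one_lt_card
  have key : ∑ c : F, g.eval c
      = ∑ i ∈ Finset.range (Fintype.card F), g.coeff i * ∑ c : F, c ^ i := by
    simp_rw [eval_eq_sum_range' hg, Finset.mul_sum]
    rw [Finset.sum_comm]
  have hcard : Fintype.card F = (Fintype.card F - 1) + 1 := by omega
  rw [key, hcard, Finset.sum_range_succ, Finset.sum_eq_zero, zero_add, Nat.add_sub_cancel,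
    hermite_sum_pow_card_sub_one, mul_neg, mul_one]
  intro i hi
  rw [FiniteField.sum_pow_lt_card_sub_one F i (Finset.mem_range.mp hi), mul_zero]

private lemma hermite_monic : (X ^ Fintype.card F - X : F[X]).Monic := by
  refine (monic_X_pow _).sub_of_left ?_
  rw [degree_X_pow, degree_X]
  exact_mod_cast (Fintype.one_lt_card : 1 < Fintype.card F)

private lemma hermite_natDegree_m :
    (X ^ Fintype.card F - X : F[X]).natDegree = Fintype.card F := by
  have hq : 2 ≤ Fintype.card F := Fintype.one_lt_card
  rw [natDegree_sub_eq_left_of_natDegree_lt, natDegree_X_pow]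
  rw [natDegree_X, natDegree_X_pow]; omega

private lemma hermite_mod_lt (h : F[X]) :
    (h %ₘ (X ^ Fintype.card F - X)).natDegree < Fintype.card F := by
  have hq : 2 ≤ Fintype.card F := Fintype.one_lt_card
  have hne : (X ^ Fintype.card F - X : F[X]) ≠ 1 := by
    intro h1
    have := congrArg natDegree h1
    rw [hermite_natDegree_m, natDegree_one] at this
    omega
  have := natDegree_modByMonic_lt h hermite_monic hne
  rwa [hermite_natDegree_m] at this

private lemma hermite_mod_eval (h : F[X]) (c : F) :
    (h %ₘ (X ^ Fintype.card F - X)).eval c = h.eval c := by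
  conv_rhs => rw [← modByMonic_add_div h (X ^ Fintype.card F - X)]
  simp [FiniteField.pow_card]

private lemma hermite_S (h : F[X]) :
    ∑ c : F, h.eval c = - (h %ₘ (X ^ Fintype.card F - X)).coeff (Fintype.card F - 1) := by
  calc ∑ c : F, h.eval c = ∑ c : F, (h %ₘ (X ^ Fintype.card F - X)).eval c := by
        exact Finset.sum_congr rfl fun c _ => (hermite_mod_eval h c).symm
    _ = _ := hermite_sum_eval (hermite_mod_lt h)

end HermiteAux

theorem hermite_criterion {F : Type*} [Field F] [Fintype F]
    (f : F[X]) :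
    Function.Bijective (fun c : F => f.eval c) ↔
      (((f ^ (Fintype.card F - 1)) %ₘ (X ^ Fintype.card F - X)).Monic ∧
        ((f ^ (Fintype.card F - 1)) %ₘ (X ^ Fintype.card F - X)).natDegree =
          Fintype.card F - 1) ∧
      (∀ t : ℕ, 1 ≤ t → t ≤ Fintype.card F - 2 → ¬ (ringChar F ∣ t) →
        ((f ^ t) %ₘ (X ^ Fintype.card F - X)).natDegree ≤ Fintype.card F - 2) := by
  classical
  have hq : 2 ≤ Fintype.card F := Fintype.one_lt_card
  have hS : ∀ t : ℕ, ∑ c : F, (f.eval c) ^ t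
      = - ((f ^ t) %ₘ (X ^ Fintype.card F - X)).coeff (Fintype.card F - 1) := by
    intro t
    have := hermite_S (f ^ t)
    simp only [eval_pow] at this
    exact this
  constructor
  · intro hbij
    have hsum : ∀ t : ℕ, ∑ c : F, (f.eval c) ^ t = ∑ b : F, b ^ t := fun t =>
      Fintype.sum_bijective _ hbij _ _ (fun c => rfl)
    constructor
    · have h1 : ((f ^ (Fintype.card F - 1)) %ₘ (X ^ Fintype.card F - X)).coeff
          (Fintype.card F - 1) = 1 := by
        have h2 := hS (Fintype.card F - 1)
        rw [hsum, hermite_sum_pow_card_sub_one] at h2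
        have := neg_injective h2
        exact this.symm
      set g := (f ^ (Fintype.card F - 1)) %ₘ (X ^ Fintype.card F - X) with hg
      have hne : g ≠ 0 := by
        intro h0
        rw [h0, coeff_zero] at h1
        exact zero_ne_one h1
      have hle : Fintype.card F - 1 ≤ g.natDegree :=
        le_natDegree_of_ne_zero (h1 ▸ one_ne_zero)
      have hlt : g.natDegree < Fintype.card F := hermite_mod_lt _
      have heq : g.natDegree = Fintype.card F - 1 := by omega
      refine ⟨?_, heq⟩
      rw [Monic, leadingCoeff, heq]
      exact h1
    · intro t ht1 ht2 _
      have h0 : ((f ^ t) %ₘ (X ^ Fintype.card F - X)).coeff (Fintype.card F - 1) = 0 := by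
        have h2 := hS t
        rw [hsum, FiniteField.sum_pow_lt_card_sub_one F t (by omega)] at h2
        exact neg_eq_zero.mp h2.symm
      set g := (f ^ t) %ₘ (X ^ Fintype.card F - X) with hg
      by_cases hg0 : g = 0
      · simp [hg0]
      · have hlt : g.natDegree < Fintype.card F := hermite_mod_lt _
        have hne : g.natDegree ≠ Fintype.card F - 1 := by
          intro he
          apply leadingCoeff_ne_zero.mpr hg0
          rw [leadingCoeff, he]
          exact h0
        omega
  · rintro ⟨⟨hmon, hdeg⟩, hcond⟩
    haveI := ringChar.charP F
    have hprime : (ringChar F).Prime := CharP.char_is_prime F (ringChar F)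
    haveI : Fact (ringChar F).Prime := ⟨hprime⟩
    haveI : ExpChar F (ringChar F) := ExpChar.prime hprime
    have hSq : ∑ c : F, (f.eval c) ^ (Fintype.card F - 1) = -1 := by
      rw [hS]
      have h1 : ((f ^ (Fintype.card F - 1)) %ₘ (X ^ Fintype.card F - X)).coeff
          (Fintype.card F - 1) = 1 := by
        have := hmon.leadingCoeff
        rwa [leadingCoeff, hdeg] at this
      rw [h1]
    have hS00 : ∑ _c : F, (1 : F) = 0 := by
      rw [Finset.sum_const, Finset.card_univ, nsmul_eq_mul, mul_one,
        FiniteField.cast_card_eq_zero]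
    have hS0 : ∀ t : ℕ, t ≤ Fintype.card F - 2 → ∑ c : F, (f.eval c) ^ t = 0 := by
      intro t
      induction t using Nat.strong_induction_on with
      | _ t ih =>
        intro ht2
        rcases Nat.eq_zero_or_pos t with rfl | ht1
        · simp only [pow_zero]
          exact hS00
        by_cases hp : ringChar F ∣ t
        · obtain ⟨s, rfl⟩ := hp
          have hp2 : 2 ≤ ringChar F := hprime.two_le
          have hs1 : 1 ≤ s := by
            rcases Nat.eq_zero_or_pos s with rfl | h
            · omega
            · exact h
          have hlt : s < ringChar F * s := by
            have h2s : 2 * s ≤ ringChar F * s := Nat.mul_le_mul_right s hp2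
            omega
          have step : ∑ c : F, (f.eval c) ^ (ringChar F * s)
              = (∑ c : F, (f.eval c) ^ s) ^ ringChar F := by
            rw [sum_pow_char]
            exact Finset.sum_congr rfl fun c _ => by
              rw [← pow_mul, mul_comm]
          rw [step, ih s hlt (by omega), zero_pow (by omega : ringChar F ≠ 0)]
        · have hcd := hcond t ht1 ht2 hp
          rw [hS t, coeff_eq_zero_of_natDegree_lt (by omega), neg_zero]
    have hsurj : Function.Surjective (fun c : F => f.eval c) := by
      intro b
      by_contra hb
      push_neg at hb
      have hone : ∀ c : F, (f.eval c - b) ^ (Fintype.card F - 1) = 1 := fun c =>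
        FiniteField.pow_card_sub_one_eq_one _ (sub_ne_zero.mpr (hb c))
      have hcontra : ∑ c : F, (f.eval c - b) ^ (Fintype.card F - 1) = 0 := by
        rw [Finset.sum_congr rfl fun c _ => hone c]
        exact hS00
      have key : ∑ c : F, (f.eval c - b) ^ (Fintype.card F - 1) = -1 := by
        have expand : ∑ c : F, (f.eval c - b) ^ (Fintype.card F - 1)
            = ∑ i ∈ Finset.range (Fintype.card F - 1 + 1),
              (-1 : F) ^ (i + (Fintype.card F - 1)) * (∑ c : F, (f.eval c) ^ i)
                * b ^ (Fintype.card F - 1 - i) * ((Fintype.card F - 1).choose i) := by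
          simp_rw [sub_pow, Finset.mul_sum, Finset.sum_mul]
          rw [Finset.sum_comm]
        have hzero : ∑ i ∈ Finset.range (Fintype.card F - 1),
            (-1 : F) ^ (i + (Fintype.card F - 1)) * (∑ c : F, (f.eval c) ^ i)
              * b ^ (Fintype.card F - 1 - i) * ((Fintype.card F - 1).choose i) = 0 := by
          refine Finset.sum_eq_zero fun i hi => ?_
          have hi' : i < Fintype.card F - 1 := Finset.mem_range.mp hi
          rw [hS0 i (by omega), mul_zero, zero_mul, zero_mul]
        rw [expand, Finset.sum_range_succ, hzero, zero_add, hSq, Nat.sub_self, pow_zero,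
          Nat.choose_self, Nat.cast_one, mul_one, mul_one, ← two_mul, pow_mul, neg_one_sq,
          one_pow, one_mul]
      rw [hcontra] at key
      exact one_ne_zero (neg_eq_zero.mp key.symm)
    exact (Fintype.bijective_iff_surjective_and_card _).mpr ⟨hsurj, rfl⟩
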